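/- Let T = [[P, 0],[0, S]] be a block-diagonal operator on H ⊕ H with P, S ∈ B(H). Then max{ω_q(P), ω_q(S)} ≤ ω_q(T) ≤ |q|·max{ω(P), ω(S)} + √(1−|q|²)·(‖P‖²+‖S‖²)^{1/2}. -/

import Mathlib

open scoped InnerProductSpace

variable {H : Type*} [NormedAddCommGroup H] [InnerProductSpace ℂ H]

/-- The joint `q`-numerical range of a `d`-tuple of bounded operators:
`{(⟨T₁x,y⟩,…,⟨T_dx,y⟩) : ‖x‖ = ‖y‖ = 1, ⟨x,y⟩ = q}` (with `⟨x,y⟩` linear in `x`). -/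
def JtW {d : ℕ} (q : ℂ) (T : Fin d → H →L[ℂ] H) : Set (Fin d → ℂ) :=
  {z | ∃ x y : H, ‖x‖ = 1 ∧ ‖y‖ = 1 ∧ ⟪y, x⟫_ℂ = q ∧ z = fun i => ⟪y, (T i) x⟫_ℂ}


/-- The `2×2` block operator `[[P,Q],[R,S]]` acting on `H ⊕ H` (with the Hilbert space
structure of `WithLp 2 (H × H)`). -/
noncomputable def blockOp [CompleteSpace H] (P Q R S : H →L[ℂ] H) :
    WithLp 2 (H × H) →L[ℂ] WithLp 2 (H × H) :=
  ((WithLp.prodContinuousLinearEquiv 2 ℂ H H).symm.toContinuousLinearMap) ∘L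
    (((P ∘L ContinuousLinearMap.fst ℂ H H + Q ∘L ContinuousLinearMap.snd ℂ H H).prod
      (R ∘L ContinuousLinearMap.fst ℂ H H + S ∘L ContinuousLinearMap.snd ℂ H H))) ∘L
    ((WithLp.prodContinuousLinearEquiv 2 ℂ H H).toContinuousLinearMap)

/-- The joint `q`-numerical radius. -/
noncomputable def Jtw {K : Type*} [NormedAddCommGroup K] [InnerProductSpace ℂ K] {d : ℕ}
    (q : ℂ) (T : Fin d → K →L[ℂ] K) : ℝ :=
  sSup {r | ∃ x y : K, ‖x‖ = 1 ∧ ‖y‖ = 1 ∧ ⟪y, x⟫_ℂ = q ∧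
    r = Real.sqrt (∑ i, ‖⟪y, (T i) x⟫_ℂ‖ ^ 2)}

/-- The single-operator `q`-numerical radius. -/
noncomputable def wq {K : Type*} [NormedAddCommGroup K] [InnerProductSpace ℂ K]
    (q : ℂ) (S : K →L[ℂ] K) : ℝ :=
  sSup {r | ∃ x y : K, ‖x‖ = 1 ∧ ‖y‖ = 1 ∧ ⟪y, x⟫_ℂ = q ∧ r = ‖⟪y, S x⟫_ℂ‖}

/-- The classical numerical radius. -/
noncomputable def nr {K : Type*} [NormedAddCommGroup K] [InnerProductSpace ℂ K]
    (T : K →L[ℂ] K) : ℝ :=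
  sSup {r | ∃ x : K, ‖x‖ = 1 ∧ r = ‖⟪x, T x⟫_ℂ‖}

section Aux

variable {K : Type*} [NormedAddCommGroup K] [InnerProductSpace ℂ K]

lemma wq_bddAbove (q : ℂ) (T : K →L[ℂ] K) :
    BddAbove {r | ∃ x y : K, ‖x‖ = 1 ∧ ‖y‖ = 1 ∧ ⟪y, x⟫_ℂ = q ∧
      r = ‖⟪y, T x⟫_ℂ‖} := by
  refine ⟨‖T‖, ?_⟩
  rintro r ⟨x, y, hx, hy, hq, rfl⟩
  calc ‖⟪y, T x⟫_ℂ‖ = ‖⟪y, T x⟫_ℂ‖ := rfl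
    _ ≤ ‖y‖ * ‖T x‖ := norm_inner_le_norm _ _
    _ ≤ ‖y‖ * (‖T‖ * ‖x‖) := by
        gcongr; exact T.le_opNorm x
    _ = ‖T‖ := by rw [hx, hy]; ring

lemma wq_nonneg (q : ℂ) (T : K →L[ℂ] K) : 0 ≤ wq q T := by
  apply Real.sSup_nonneg
  rintro r ⟨x, y, _, _, _, rfl⟩
  positivity

lemma nr_nonneg (T : K →L[ℂ] K) : 0 ≤ nr T := by
  apply Real.sSup_nonneg
  rintro r ⟨x, _, rfl⟩
  positivity

lemma nr_bddAbove (T : K →L[ℂ] K) :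
    BddAbove {r | ∃ x : K, ‖x‖ = 1 ∧ r = ‖⟪x, T x⟫_ℂ‖} := by
  refine ⟨‖T‖, ?_⟩
  rintro r ⟨x, hx, rfl⟩
  calc ‖⟪x, T x⟫_ℂ‖ = ‖⟪x, T x⟫_ℂ‖ := rfl
    _ ≤ ‖x‖ * ‖T x‖ := norm_inner_le_norm _ _
    _ ≤ ‖x‖ * (‖T‖ * ‖x‖) := by gcongr; exact T.le_opNorm x
    _ = ‖T‖ := by rw [hx]; ring

lemma abs_inner_le_nr (T : K →L[ℂ] K) (u : K) :
    ‖⟪u, T u⟫_ℂ‖ ≤ ‖u‖ ^ 2 * nr T := by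
  rcases eq_or_ne u 0 with rfl | hu
  · simp
  · have hn : ‖u‖ ≠ 0 := norm_ne_zero_iff.mpr hu
    set v : K := (‖u‖ : ℂ)⁻¹ • u with hv
    have hvn : ‖v‖ = 1 := by
      rw [hv, norm_smul]
      simp [hn]
    have hmem : ‖⟪v, T v⟫_ℂ‖ ∈
        {r | ∃ x : K, ‖x‖ = 1 ∧ r = ‖⟪x, T x⟫_ℂ‖} := ⟨v, hvn, rfl⟩
    have h1 : ‖⟪v, T v⟫_ℂ‖ ≤ nr T := le_csSup (nr_bddAbove T) hmem
    have h2 : ⟪v, T v⟫_ℂ = (‖u‖ : ℂ)⁻¹ * ((starRingEnd ℂ) (‖u‖ : ℂ)⁻¹ * ⟪u, T u⟫_ℂ) := by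
      rw [hv]
      simp [inner_smul_left, inner_smul_right, mul_comm]
    have h3 : ‖⟪v, T v⟫_ℂ‖ = (‖u‖^2)⁻¹ * ‖⟪u, T u⟫_ℂ‖ := by
      rw [h2]
      simp [norm_mul, Complex.norm_conj]
      rw [sq, mul_inv]
      ring
    have hle := mul_le_mul_of_nonneg_left h1 (by positivity : (0:ℝ) ≤ ‖u‖^2)
    rw [h3] at hle
    have heq : ‖u‖^2 * ((‖u‖^2)⁻¹ * ‖⟪u, T u⟫_ℂ‖) = ‖⟪u, T u⟫_ℂ‖ := by
      field_simp
    linarith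

/-- Key pointwise decomposition bound. -/
lemma key_bound (q : ℂ) (hq : ‖q‖ ≤ 1) (T : K →L[ℂ] K) (x y : K)
    (hx : ‖x‖ = 1) (hy : ‖y‖ = 1) (hxy : ⟪y, x⟫_ℂ = q) :
    ‖⟪y, T x⟫_ℂ‖ ≤
      ‖q‖ * ‖⟪x, T x⟫_ℂ‖ + Real.sqrt (1 - ‖q‖ ^ 2) * ‖T x‖ := by
  set z : K := y - (starRingEnd ℂ) q • x with hz
  have hzx : ⟪y, x⟫_ℂ = q := hxy
  have hnz2 : ‖z‖ ^ 2 = 1 - ‖q‖ ^ 2 := by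
    have h := @norm_sub_sq ℂ K _ _ _ y ((starRingEnd ℂ) q • x)
    rw [hz, h]
    have h1 : ⟪y, (starRingEnd ℂ) q • x⟫_ℂ = (starRingEnd ℂ) q * q := by
      rw [inner_smul_right, hxy]
    have h2 : RCLike.re ((starRingEnd ℂ) q * q) = ‖q‖ ^ 2 := by
      simp [RCLike.re_to_complex, mul_comm, Complex.mul_conj, Complex.normSq_eq_norm_sq,
        ← Complex.ofReal_pow]
    have h3 : ‖(starRingEnd ℂ) q • x‖ = ‖q‖ := by
      rw [norm_smul, hx]
      simp
    rw [h1, h2, h3, hy]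
    ring
  have hnz : ‖z‖ = Real.sqrt (1 - ‖q‖ ^ 2) := by
    rw [← hnz2, Real.sqrt_sq (norm_nonneg z)]
  have hdecomp : ⟪y, T x⟫_ℂ = q * ⟪x, T x⟫_ℂ + ⟪z, T x⟫_ℂ := by
    rw [hz, inner_sub_left, inner_smul_left, Complex.conj_conj]
    ring
  calc ‖⟪y, T x⟫_ℂ‖
      ≤ ‖q * ⟪x, T x⟫_ℂ‖ + ‖⟪z, T x⟫_ℂ‖ := by
        rw [hdecomp]; exact norm_add_le _ _
    _ ≤ ‖q‖ * ‖⟪x, T x⟫_ℂ‖ + Real.sqrt (1 - ‖q‖ ^ 2) * ‖T x‖ := by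
        rw [norm_mul]
        gcongr
        calc ‖⟪z, T x⟫_ℂ‖ = ‖⟪z, T x⟫_ℂ‖ := rfl
          _ ≤ ‖z‖ * ‖T x‖ := norm_inner_le_norm _ _
          _ = Real.sqrt (1 - ‖q‖ ^ 2) * ‖T x‖ := by rw [hnz]

end Aux

lemma blockOp_fst [CompleteSpace H] (P S : H →L[ℂ] H) (x : WithLp 2 (H × H)) :
    (blockOp P 0 0 S x).fst = P x.fst := by
  simp [blockOp, WithLp.prodContinuousLinearEquiv_apply,
    WithLp.prodContinuousLinearEquiv_symm_apply, WithLp.ofLp_fst, WithLp.ofLp_snd,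
    WithLp.toLp_fst, WithLp.toLp_snd]

lemma blockOp_snd [CompleteSpace H] (P S : H →L[ℂ] H) (x : WithLp 2 (H × H)) :
    (blockOp P 0 0 S x).snd = S x.snd := by
  simp [blockOp, WithLp.prodContinuousLinearEquiv_apply,
    WithLp.prodContinuousLinearEquiv_symm_apply, WithLp.ofLp_fst, WithLp.ofLp_snd,
    WithLp.toLp_fst, WithLp.toLp_snd]

theorem stmt_16 [CompleteSpace H] (q : ℂ) (hq : ‖q‖ ≤ 1) (P S : H →L[ℂ] H) :
    max (wq q P) (wq q S) ≤ wq q (blockOp P 0 0 S) ∧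
      wq q (blockOp P 0 0 S) ≤
        ‖q‖ * max (nr P) (nr S) +
          Real.sqrt (1 - ‖q‖ ^ 2) * Real.sqrt (‖P‖ ^ 2 + ‖S‖ ^ 2) := by
  set T := blockOp P 0 0 S with hT
  have hinnerT : ∀ x y : WithLp 2 (H × H),
      ⟪y, T x⟫_ℂ = ⟪y.fst, P x.fst⟫_ℂ + ⟪y.snd, S x.snd⟫_ℂ := by
    intro x y
    simp only [WithLp.prod_inner_apply, WithLp.ofLp_fst, WithLp.ofLp_snd]; rw [blockOp_fst, blockOp_snd]
  constructor
  · -- lower bound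
    have h1 : wq q P ≤ wq q T := by
      apply Real.sSup_le _ (wq_nonneg q T)
      rintro r ⟨x, y, hx, hy, hxy, rfl⟩
      apply le_csSup (wq_bddAbove q T)
      refine ⟨(WithLp.equiv 2 (H × H)).symm (x, 0), (WithLp.equiv 2 (H × H)).symm (y, 0), ?_, ?_, ?_, ?_⟩
      · rw [WithLp.equiv_symm_apply, WithLp.norm_toLp_fst]; exact hx
      · rw [WithLp.equiv_symm_apply, WithLp.norm_toLp_fst]; exact hy
      · rw [WithLp.prod_inner_apply]
        simp [WithLp.equiv_symm_apply, hxy]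
      · rw [hinnerT]
        simp [WithLp.equiv_symm_apply]
    have h2 : wq q S ≤ wq q T := by
      apply Real.sSup_le _ (wq_nonneg q T)
      rintro r ⟨x, y, hx, hy, hxy, rfl⟩
      apply le_csSup (wq_bddAbove q T)
      refine ⟨(WithLp.equiv 2 (H × H)).symm (0, x), (WithLp.equiv 2 (H × H)).symm (0, y), ?_, ?_, ?_, ?_⟩
      · rw [WithLp.equiv_symm_apply, WithLp.norm_toLp_snd]; exact hx
      · rw [WithLp.equiv_symm_apply, WithLp.norm_toLp_snd]; exact hy
      · rw [WithLp.prod_inner_apply]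
        simp [WithLp.equiv_symm_apply, hxy]
      · rw [hinnerT]
        simp [WithLp.equiv_symm_apply]
    exact max_le h1 h2
  · -- upper bound
    apply Real.sSup_le
    · rintro r ⟨x, y, hx, hy, hxy, rfl⟩
      have hxsq : ‖x.fst‖ ^ 2 + ‖x.snd‖ ^ 2 = 1 := by
        rw [← WithLp.prod_norm_sq_eq_of_L2, hx]; norm_num
      have hx1 : ‖x.fst‖ ≤ 1 := by nlinarith [norm_nonneg x.fst, norm_nonneg x.snd]
      have hx2 : ‖x.snd‖ ≤ 1 := by nlinarith [norm_nonneg x.fst, norm_nonneg x.snd]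
      have step1 := key_bound q hq T x y hx hy hxy
      have hM : (0:ℝ) ≤ max (nr P) (nr S) := le_max_of_le_left (nr_nonneg P)
      have hmid : ‖⟪x, T x⟫_ℂ‖ ≤ max (nr P) (nr S) := by
        rw [hinnerT]
        calc ‖⟪x.fst, P x.fst⟫_ℂ + ⟪x.snd, S x.snd⟫_ℂ‖
            ≤ ‖⟪x.fst, P x.fst⟫_ℂ‖ + ‖⟪x.snd, S x.snd⟫_ℂ‖ :=
              norm_add_le _ _
          _ ≤ ‖x.fst‖ ^ 2 * nr P + ‖x.snd‖ ^ 2 * nr S :=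
              add_le_add (abs_inner_le_nr P x.fst) (abs_inner_le_nr S x.snd)
          _ ≤ ‖x.fst‖ ^ 2 * max (nr P) (nr S) + ‖x.snd‖ ^ 2 * max (nr P) (nr S) := by
              gcongr
              · exact le_max_left _ _
              · exact le_max_right _ _
          _ = max (nr P) (nr S) := by rw [← add_mul, hxsq, one_mul]
      have hnormT : ‖T x‖ ≤ Real.sqrt (‖P‖ ^ 2 + ‖S‖ ^ 2) := by
        have h1 : ‖T x‖ ^ 2 = ‖P x.fst‖ ^ 2 + ‖S x.snd‖ ^ 2 := by
          rw [WithLp.prod_norm_sq_eq_of_L2, blockOp_fst, blockOp_snd]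
        have h2 : ‖P x.fst‖ ≤ ‖P‖ := by
          calc ‖P x.fst‖ ≤ ‖P‖ * ‖x.fst‖ := P.le_opNorm _
            _ ≤ ‖P‖ * 1 := by gcongr
            _ = ‖P‖ := mul_one _
        have h3 : ‖S x.snd‖ ≤ ‖S‖ := by
          calc ‖S x.snd‖ ≤ ‖S‖ * ‖x.snd‖ := S.le_opNorm _
            _ ≤ ‖S‖ * 1 := by gcongr
            _ = ‖S‖ := mul_one _
        have h4 : ‖T x‖ ^ 2 ≤ ‖P‖ ^ 2 + ‖S‖ ^ 2 := by
          rw [h1]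
          exact add_le_add (pow_le_pow_left₀ (norm_nonneg _) h2 2)
            (pow_le_pow_left₀ (norm_nonneg _) h3 2)
        calc ‖T x‖ = Real.sqrt (‖T x‖ ^ 2) := (Real.sqrt_sq (norm_nonneg _)).symm
          _ ≤ Real.sqrt (‖P‖ ^ 2 + ‖S‖ ^ 2) := Real.sqrt_le_sqrt h4
      calc ‖⟪y, T x⟫_ℂ‖
          ≤ ‖q‖ * ‖⟪x, T x⟫_ℂ‖
            + Real.sqrt (1 - ‖q‖ ^ 2) * ‖T x‖ := step1
        _ ≤ ‖q‖ * max (nr P) (nr S)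
            + Real.sqrt (1 - ‖q‖ ^ 2) * Real.sqrt (‖P‖ ^ 2 + ‖S‖ ^ 2) :=
            add_le_add (mul_le_mul_of_nonneg_left hmid (norm_nonneg q))
              (mul_le_mul_of_nonneg_left hnormT (Real.sqrt_nonneg _))
    · have h0 : (0:ℝ) ≤ max (nr P) (nr S) := le_max_of_le_left (nr_nonneg P)
      exact add_nonneg (mul_nonneg (norm_nonneg q) h0)
        (mul_nonneg (Real.sqrt_nonneg _) (Real.sqrt_nonneg _))
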